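/- Let A ⊆ B ⊆ C be commutative unital Banach algebras with common unit and continuous homomorphic embeddings, with A dense in B. If every multiplicative linear functional φ ∈ M(A) has a unique extension φ′ ∈ M(C), then every multiplicative linear functional ψ ∈ M(B) has a unique extension ψ′ ∈ M(C). -/

import Mathlib

open MeasureTheory Filter Topology Set

noncomputable section

/-- A Banach function norm on nonnegative measurable functions on ℝ (axioms (A1)–(A5)). -/
structure BFN where
  ρ : (ℝ → ENNReal) → ENNReal
  eq_zero_iff : ∀ f : ℝ → ENNReal, Measurable f → (ρ f = 0 ↔ f =ᵐ[volume] 0)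
  smul_eq : ∀ (c : ENNReal) (f : ℝ → ENNReal), Measurable f → ρ (fun x => c * f x) = c * ρ f
  add_le : ∀ f g : ℝ → ENNReal, Measurable f → Measurable g →
    ρ (fun x => f x + g x) ≤ ρ f + ρ g
  mono : ∀ f g : ℝ → ENNReal, Measurable f → Measurable g →
    (∀ᵐ x ∂volume, g x ≤ f x) → ρ g ≤ ρ f
  fatou : ∀ f : ℕ → ℝ → ENNReal, (∀ n, Measurable (f n)) →
    (∀ᵐ x ∂volume, Monotone fun n => f n x) →
    Tendsto (fun n => ρ (f n)) atTop (𝓝 (ρ fun x => ⨆ n, f n x))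
  indicator_lt_top : ∀ E : Set ℝ, MeasurableSet E → volume E < ⊤ → ρ (E.indicator 1) < ⊤
  loc_L1 : ∀ E : Set ℝ, MeasurableSet E → volume E < ⊤ →
    ∃ C : ENNReal, C ≠ 0 ∧ C ≠ ⊤ ∧ ∀ f : ℝ → ENNReal, Measurable f →
      (∫⁻ x in E, f x) ≤ C * ρ f

namespace BFN

variable (N : BFN)

/-- The (extended) norm of a complex-valued function in the Banach function space. -/
def norm' (f : ℝ → ℂ) : ENNReal := N.ρ fun x => (‖f x‖₊ : ENNReal)

/-- Membership in the Banach function space X(ℝ). -/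
def Mem (f : ℝ → ℂ) : Prop := AEMeasurable f volume ∧ N.norm' f < ⊤

/-- A set of functions is dense in X(ℝ). -/
def DenseIn (S : Set (ℝ → ℂ)) : Prop :=
  ∀ f, N.Mem f → ∀ ε : ℝ, 0 < ε → ∃ g ∈ S, N.norm' (fun x => f x - g x) < ENNReal.ofReal ε

/-- Separability of X(ℝ). -/
def Separable : Prop :=
  ∃ D : Set (ℝ → ℂ), D.Countable ∧ (∀ g ∈ D, N.Mem g) ∧ N.DenseIn D

/-- The associate (Köthe dual) norm ρ'. -/
def assoc : (ℝ → ENNReal) → ENNReal := fun g =>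
  ⨆ f : {f : ℝ → ENNReal // Measurable f ∧ N.ρ f ≤ 1}, ∫⁻ x, f.1 x * g x

end BFN

/-- The non-centered Hardy–Littlewood maximal function (of a nonnegative function). -/
def maximalFn (g : ℝ → ENNReal) (x : ℝ) : ENNReal :=
  ⨆ (a : ℝ) (b : ℝ) (_ : a < b) (_ : x ∈ Set.Icc a b),
    (ENNReal.ofReal (b - a))⁻¹ * ∫⁻ y in Set.Icc a b, g y

/-- Boundedness of the Hardy–Littlewood maximal operator with respect to a function norm. -/
def MaximalBounded (ρ : (ℝ → ENNReal) → ENNReal) : Prop :=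
  ∃ C : ENNReal, C ≠ ⊤ ∧ ∀ g : ℝ → ENNReal, Measurable g → ρ (maximalFn g) ≤ C * ρ g

/-- The standing hypotheses: X(ℝ) separable, M bounded on X(ℝ) and on X'(ℝ). -/
def GoodBFN (N : BFN) : Prop := N.Separable ∧ MaximalBounded N.ρ ∧ MaximalBounded N.assoc

/-- The Fourier convolution operator W⁰(b) = F⁻¹ b F, on nice functions. -/
def W0 (b f : ℝ → ℂ) : ℝ → ℂ :=
  FourierTransformInv.fourierInv (fun x => b x * FourierTransform.fourier f x)

/-- A bounded linear operator on X(ℝ) (linearity up to null functions). -/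
structure OpOn (N : BFN) where
  toFun : (ℝ → ℂ) → (ℝ → ℂ)
  maps_mem : ∀ f, N.Mem f → N.Mem (toFun f)
  map_add_ae : ∀ f g, N.Mem f → N.Mem g →
    N.norm' (fun x => toFun (fun y => f y + g y) x - (toFun f x + toFun g x)) = 0
  map_smul_ae : ∀ (c : ℂ) (f), N.Mem f →
    N.norm' (fun x => toFun (fun y => c * f y) x - c * toFun f x) = 0
  bounded : ∃ C : ENNReal, C ≠ ⊤ ∧ ∀ f, N.Mem f → N.norm' (toFun f) ≤ C * N.norm' f

/-- `T` has operator norm at most `C` on X(ℝ). -/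
def OpNormLe (N : BFN) (T : OpOn N) (C : ENNReal) : Prop :=
  ∀ f, N.Mem f → N.norm' (T.toFun f) ≤ C * N.norm' f

/-- `T` is (an extension of) the Fourier convolution operator with symbol `b`:
it agrees a.e. with `W⁰(b)` on `L¹ ∩ L² ∩ X`. -/
def IsMultiplierOp (N : BFN) (b : ℝ → ℂ) (T : OpOn N) : Prop :=
  ∀ f : ℝ → ℂ, Integrable f volume → MemLp f 2 volume → N.Mem f →
    N.norm' (fun x => T.toFun f x - W0 b f x) = 0

/-- `b` is a Fourier multiplier on X(ℝ). -/
def IsMultiplier (N : BFN) (b : ℝ → ℂ) : Prop :=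
  MemLp b ⊤ volume ∧ ∃ T : OpOn N, IsMultiplierOp N b T

/-- The multiplier norm ‖b‖_{M_X} = ‖W⁰(b)‖_{B(X)}. -/
def mNorm (N : BFN) (b : ℝ → ℂ) : ENNReal :=
  sInf {C | ∃ T : OpOn N, IsMultiplierOp N b T ∧ OpNormLe N T C}

/-- A map of functions is a compact operator on X(ℝ): it maps X to X and the image of the
unit ball is totally bounded. -/
def CompactMap (N : BFN) (T : (ℝ → ℂ) → (ℝ → ℂ)) : Prop :=
  (∀ f, N.Mem f → N.Mem (T f)) ∧
  ∀ ε : ℝ, 0 < ε → ∃ S : Set (ℝ → ℂ), S.Finite ∧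
    ∀ f, N.Mem f → N.norm' f ≤ 1 → ∃ g ∈ S, N.norm' (fun x => T f x - g x) < ENNReal.ofReal ε

/-- A bounded linear operator on X(ℝ) is compact. -/
def IsCompactOp (N : BFN) (K : OpOn N) : Prop := CompactMap N K.toFun

/-- The oscillation of `f` over a set `E`. -/
def osc (f : ℝ → ℂ) (E : Set ℝ) : ENNReal :=
  ⨆ s ∈ E, ⨆ t ∈ E, (‖f s - f t‖₊ : ENNReal)

/-- `f` slowly oscillates at a finite point `lam`. -/
def SlowOscAt (f : ℝ → ℂ) (lam : ℝ) : Prop :=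
  ∀ r : ℝ, 0 < r → r < 1 → ∀ ε : ℝ, 0 < ε → ∃ δ : ℝ, 0 < δ ∧ ∀ x : ℝ, 0 < x → x < δ →
    osc f (Set.Icc (lam - x) (lam - r * x) ∪ Set.Icc (lam + r * x) (lam + x)) <
      ENNReal.ofReal ε

/-- `f` slowly oscillates at ∞. -/
def SlowOscAtInf (f : ℝ → ℂ) : Prop :=
  ∀ r : ℝ, 0 < r → r < 1 → ∀ ε : ℝ, 0 < ε → ∃ R : ℝ, 0 < R ∧ ∀ x : ℝ, R < x →
    osc f (Set.Icc (-x) (-(r * x)) ∪ Set.Icc (r * x) x) < ENNReal.ofReal ε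

/-- Boundedness of a function. -/
def Bdd (f : ℝ → ℂ) : Prop := ∃ M : ℝ, ∀ x, ‖f x‖ ≤ M

/-- The algebra SO_t, for t ∈ Ṙ = ℝ ∪ {∞} (encoded as `Option ℝ`, `none` = ∞):
bounded functions, continuous on Ṙ \ {t}, slowly oscillating at t. -/
def SO : Option ℝ → (ℝ → ℂ) → Prop
  | some lam, f => Bdd f ∧ ContinuousOn f {lam}ᶜ ∧
      (∃ L : ℂ, Tendsto f (cocompact ℝ) (𝓝 L)) ∧ SlowOscAt f lam
  | none, f => Bdd f ∧ Continuous f ∧ SlowOscAtInf f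

/-- The operator D_λ a (x) = (x − λ) a'(x). -/
def Dop (lam : ℝ) (a : ℝ → ℂ) : ℝ → ℂ := fun x => ((x : ℂ) - (lam : ℂ)) * deriv a x

/-- The operator D_∞ a (x) = x a'(x). -/
def DopInf (a : ℝ → ℂ) : ℝ → ℂ := fun x => (x : ℂ) * deriv a x

/-- The algebra SO_t^3 of C³ slowly oscillating functions with
lim_{x→t} (D_t^k a)(x) = 0 for k = 1,2,3. -/
def SO3 : Option ℝ → (ℝ → ℂ) → Prop
  | some lam, a => SO (some lam) a ∧ ContDiffOn ℝ 3 a {lam}ᶜ ∧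
      ∀ k : ℕ, 1 ≤ k → k ≤ 3 → Tendsto ((Dop lam)^[k] a) (𝓝[≠] lam) (𝓝 0)
  | none, a => SO none a ∧ ContDiff ℝ 3 a ∧
      ∀ k : ℕ, 1 ≤ k → k ≤ 3 → Tendsto (DopInf^[k] a) (cocompact ℝ) (𝓝 0)

/-- SO_{t,X(ℝ)}: the closure of SO_t^3 in the multiplier norm of X(ℝ). -/
def SOX (N : BFN) (t : Option ℝ) (b : ℝ → ℂ) : Prop :=
  IsMultiplier N b ∧ ∀ ε : ℝ, 0 < ε → ∃ a, SO3 t a ∧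
    IsMultiplier N (fun x => b x - a x) ∧
    mNorm N (fun x => b x - a x) < ENNReal.ofReal ε

/-- The *-algebra generated by all the SO_t, t ∈ Ṙ. -/
inductive SOgen : (ℝ → ℂ) → Prop
  | base (t : Option ℝ) (f : ℝ → ℂ) : SO t f → SOgen f
  | add {f g : ℝ → ℂ} : SOgen f → SOgen g → SOgen (fun x => f x + g x)
  | mul {f g : ℝ → ℂ} : SOgen f → SOgen g → SOgen (fun x => f x * g x)
  | smul (c : ℂ) {f : ℝ → ℂ} : SOgen f → SOgen (fun x => c * f x)
  | star {f : ℝ → ℂ} : SOgen f → SOgen (fun x => starRingEnd ℂ (f x))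

/-- SO^◇: the smallest C*-subalgebra of L^∞(ℝ) containing all SO_t. -/
def SOdiamond (f : ℝ → ℂ) : Prop :=
  MemLp f ⊤ volume ∧ ∀ ε : ℝ, 0 < ε → ∃ g, SOgen g ∧
    eLpNorm (fun x => f x - g x) ⊤ volume < ENNReal.ofReal ε

/-- The algebra generated by all the SO_{t,X(ℝ)}, t ∈ Ṙ. -/
inductive SOXgen (N : BFN) : (ℝ → ℂ) → Prop
  | base (t : Option ℝ) (f : ℝ → ℂ) : SOX N t f → SOXgen N f
  | add {f g : ℝ → ℂ} : SOXgen N f → SOXgen N g → SOXgen N (fun x => f x + g x)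
  | mul {f g : ℝ → ℂ} : SOXgen N f → SOXgen N g → SOXgen N (fun x => f x * g x)
  | smul (c : ℂ) {f : ℝ → ℂ} : SOXgen N f → SOXgen N (fun x => c * f x)

/-- SO_{X(ℝ)}^◇: the smallest Banach subalgebra of M_{X(ℝ)} containing all SO_{t,X(ℝ)}. -/
def SOXdiamond (N : BFN) (b : ℝ → ℂ) : Prop :=
  IsMultiplier N b ∧ ∀ ε : ℝ, 0 < ε → ∃ g, SOXgen N g ∧
    IsMultiplier N (fun x => b x - g x) ∧
    mNorm N (fun x => b x - g x) < ENNReal.ofReal ε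

/-- A multiplicative linear functional (character) on a set `S` of functions
(which respects a.e. equality, as elements of function algebras are a.e.-classes). -/
structure CharOn (S : Set (ℝ → ℂ)) where
  φ : (ℝ → ℂ) → ℂ
  map_ae : ∀ f g : ℝ → ℂ, f ∈ S → g ∈ S → f =ᵐ[volume] g → φ f = φ g
  map_add : ∀ f ∈ S, ∀ g ∈ S, φ (fun x => f x + g x) = φ f + φ g
  map_mul : ∀ f ∈ S, ∀ g ∈ S, φ (fun x => f x * g x) = φ f * φ g
  map_smul : ∀ (c : ℂ), ∀ f ∈ S, φ (fun x => c * f x) = c * φ f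
  map_one : φ (fun _ => 1) = 1

/-- The algebra C(Ṙ): continuous functions on ℝ having a limit at ∞. -/
def CRdot (f : ℝ → ℂ) : Prop := Continuous f ∧ ∃ L : ℂ, Tendsto f (cocompact ℝ) (𝓝 L)

/-- The character `χ` on `S` lies in the fiber over `t ∈ Ṙ`: its restriction to C(Ṙ)
is the evaluation at `t`. -/
def InFiber (S : Set (ℝ → ℂ)) (χ : CharOn S) : Option ℝ → Prop
  | some lam => ∀ f, f ∈ S → CRdot f → χ.φ f = f lam
  | none => ∀ f, f ∈ S → CRdot f → ∀ L : ℂ, Tendsto f (cocompact ℝ) (𝓝 L) → χ.φ f = L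

/-- The spectrum of `f` in the function algebra `S` (invertibility understood a.e.). -/
def specIn (S : Set (ℝ → ℂ)) (f : ℝ → ℂ) : Set ℂ :=
  {z | ¬ ∃ g ∈ S, (fun x => (f x - z) * g x) =ᵐ[volume] (fun _ => (1 : ℂ))}

/-- Positivity of an element of the function algebra `S`: self-adjoint with
spectrum contained in [0, ∞). -/
def IsPositiveIn (S : Set (ℝ → ℂ)) (f : ℝ → ℂ) : Prop :=
  (∀ x, (f x).im = 0) ∧ specIn S f ⊆ {z : ℂ | 0 ≤ z.re ∧ z.im = 0}

/-- A character on a set `S` of operators which factors through the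
compact-equivalence relation `R` (i.e. a character of the Calkin image). -/
structure CharOnOps (S : Set ((ℝ → ℂ) → (ℝ → ℂ)))
    (R : ((ℝ → ℂ) → (ℝ → ℂ)) → ((ℝ → ℂ) → (ℝ → ℂ)) → Prop) where
  φ : ((ℝ → ℂ) → (ℝ → ℂ)) → ℂ
  map_add : ∀ T ∈ S, ∀ U ∈ S, φ (fun f x => T f x + U f x) = φ T + φ U
  map_mul : ∀ T ∈ S, ∀ U ∈ S, φ (fun f => T (U f)) = φ T * φ U
  map_smul : ∀ (c : ℂ), ∀ T ∈ S, φ (fun f x => c * T f x) = c * φ T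
  congr : ∀ T ∈ S, ∀ U ∈ S, R T U → φ T = φ U


/-- Let A ⊆ B ⊆ C be commutative unital Banach algebras with continuous injective unital
embeddings, A dense in B. If every character of A extends uniquely to a character of C,
then every character of B extends uniquely to a character of C. -/
theorem character_extension_through_dense_subalgebra
    {A B C : Type*}
    [NormedCommRing A] [NormedAlgebra ℂ A] [CompleteSpace A]
    [NormedCommRing B] [NormedAlgebra ℂ B] [CompleteSpace B]
    [NormedCommRing C] [NormedAlgebra ℂ C] [CompleteSpace C]
    (ιAB : A →ₐ[ℂ] B) (ιBC : B →ₐ[ℂ] C)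
    (hABcont : Continuous ιAB) (hBCcont : Continuous ιBC)
    (hABinj : Function.Injective ιAB) (hBCinj : Function.Injective ιBC)
    (hdense : DenseRange ιAB)
    (hext : ∀ φ : WeakDual.characterSpace ℂ A,
      ∃! φ' : WeakDual.characterSpace ℂ C, ∀ a : A, φ'.1 (ιBC (ιAB a)) = φ.1 a) :
    ∀ ψ : WeakDual.characterSpace ℂ B,
      ∃! ψ' : WeakDual.characterSpace ℂ C, ∀ b : B, ψ'.1 (ιBC b) = ψ.1 b := by
  intro ψ
  -- restrict ψ to A
  set φA : WeakDual.characterSpace ℂ A :=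
    WeakDual.CharacterSpace.equivAlgHom.symm
      ((WeakDual.CharacterSpace.equivAlgHom ψ).comp ιAB) with hφA
  have hφA_apply : ∀ a : A, φA.1 a = ψ.1 (ιAB a) := fun a => rfl
  obtain ⟨φ', hφ'ext, hφ'uniq⟩ := hext φA
  refine ⟨φ', ?_, ?_⟩
  · -- φ' ∘ ιBC = ψ on B, by density
    have hcont1 : Continuous (fun b : B => φ'.1 (ιBC b)) :=
      (map_continuous φ'.1).comp hBCcont
    have hcont2 : Continuous (fun b : B => ψ.1 b) := map_continuous ψ.1
    have heq : ∀ a : A, φ'.1 (ιBC (ιAB a)) = ψ.1 (ιAB a) := fun a => by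
      rw [hφ'ext a, hφA_apply]
    intro b
    refine DenseRange.induction_on hdense b ?_ heq
    exact isClosed_eq hcont1 hcont2
  · intro ψ'' hψ''
    exact hφ'uniq ψ'' (fun a => by rw [hψ'' (ιAB a), hφA_apply])
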